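/- In the group G = ⟨α_0, α_1, α_2, … ∣ α_i α_j = α_{j+1} α_i for i < j⟩, every positive word is equal in G to a unique positive word α_{i_1} α_{i_2} ⋯ α_{i_s} with non-increasing indices i_1 ≥ i_2 ≥ ⋯ ≥ i_s. -/

import Mathlib

/-- The relators `α_i α_j (α_{j+1} α_i)⁻¹` for `i < j`. -/
def thompsonRels : Set (FreeGroup ℕ) :=
  { r | ∃ i j : ℕ, i < j ∧
      r = FreeGroup.of i * FreeGroup.of j *
            (FreeGroup.of (j + 1) * FreeGroup.of i)⁻¹ }

/-- Thompson's group `F` presented as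
`⟨α₀, α₁, … ∣ αᵢ αⱼ = α_{j+1} αᵢ for i < j⟩`. -/
abbrev ThompsonF : Type := PresentedGroup thompsonRels

/-- the generator `αₙ` -/
def alphaGen (n : ℕ) : ThompsonF := PresentedGroup.of n

/-- the element of `ThompsonF` given by a positive word (a list of indices) -/
def wordProd (l : List ℕ) : ThompsonF := (l.map alphaGen).prod

namespace TFNF

abbrev S : Type := ℕ → Bool

def cns (b : Bool) (s : S) : S := fun n => match n with
  | 0 => b
  | n + 1 => s n

def tl (s : S) : S := fun n => s (n + 1)

@[simp] lemma cns_zero (b : Bool) (s : S) : cns b s 0 = b := rfl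
@[simp] lemma cns_succ (b : Bool) (s : S) (n : ℕ) : cns b s (n + 1) = s n := rfl
@[simp] lemma tl_cns (b : Bool) (s : S) : tl (cns b s) = s := rfl
lemma tl_def (s : S) (n : ℕ) : tl s n = s (n + 1) := rfl

lemma eta {s : S} {b : Bool} (h : s 0 = b) : cns b (tl s) = s := by
  funext n; cases n with
  | zero => simp [h]
  | succ n => rfl

def x0fwd (s : S) : S :=
  if s 0 then cns true (cns true (tl s))
  else if s 1 then cns true (cns false (tl (tl s)))
  else cns false (tl (tl s))

def x0bwd (s : S) : S :=
  if s 0 then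
    (if s 1 then cns true (tl (tl s)) else cns false (cns true (tl (tl s))))
  else cns false (cns false (tl s))

lemma tl_tl (s : S) (n : ℕ) : tl (tl s) n = s (n + 2) := rfl

def x0 : Equiv.Perm S where
  toFun := x0fwd
  invFun := x0bwd
  left_inv := by
    intro s
    rcases h0 : s 0 with _ | _
    · rcases h1 : s 1 with _ | _
      · simp only [x0fwd, x0bwd, h0, h1, if_false, if_true, Bool.false_eq_true,
          cns_zero, cns_succ, tl_cns]
        funext n; cases n with
        | zero => simp [h0]
        | succ n => cases n with
          | zero => simp [tl_def, h1]
          | succ n => rfl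
      · simp only [x0fwd, x0bwd, h0, h1, if_false, if_true, Bool.false_eq_true,
          cns_zero, cns_succ, tl_cns]
        funext n; cases n with
        | zero => simp [h0]
        | succ n => cases n with
          | zero => simp [tl_def, h1]
          | succ n => rfl
    · simp only [x0fwd, x0bwd, h0, if_true, cns_zero, cns_succ, tl_cns]
      funext n; cases n with
      | zero => simp [h0]
      | succ n => rfl
  right_inv := by
    intro s
    rcases h0 : s 0 with _ | _
    · simp only [x0fwd, x0bwd, h0, if_false, Bool.false_eq_true, cns_zero, cns_succ, tl_cns]
      funext n; cases n with
      | zero => simp [h0]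
      | succ n => rfl
    · rcases h1 : s 1 with _ | _
      · simp only [x0fwd, x0bwd, h0, h1, if_false, if_true, Bool.false_eq_true,
          cns_zero, cns_succ, tl_cns]
        funext n; cases n with
        | zero => simp [h0]
        | succ n => cases n with
          | zero => simp [tl_def, h1]
          | succ n => rfl
      · simp only [x0fwd, x0bwd, h0, h1, if_true, cns_zero, cns_succ, tl_cns]
        funext n; cases n with
        | zero => simp [h0]
        | succ n => cases n with
          | zero => simp [tl_def, h1]
          | succ n => rfl

def gd (e : Equiv.Perm S) : Equiv.Perm S where
  toFun := fun s => if s 0 then cns true (e (tl s)) else s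
  invFun := fun s => if s 0 then cns true (e.symm (tl s)) else s
  left_inv := by
    intro s
    rcases h0 : s 0 with _ | _
    · simp [h0]
    · simp only [h0, if_true, cns_zero, tl_cns, Equiv.symm_apply_apply]
      exact eta h0
  right_inv := by
    intro s
    rcases h0 : s 0 with _ | _
    · simp [h0]
    · simp only [h0, if_true, cns_zero, tl_cns, Equiv.apply_symm_apply]
      exact eta h0

lemma gd_apply (e : Equiv.Perm S) (s : S) :
    gd e s = if s 0 then cns true (e (tl s)) else s := rfl

def xP : ℕ → Equiv.Perm S
  | 0 => x0
  | n + 1 => gd (xP n)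

lemma x0_apply (s : S) : x0 s = x0fwd s := rfl

lemma gd_mul (e f : Equiv.Perm S) : gd e * gd f = gd (e * f) := by
  apply Equiv.ext
  intro s
  rcases h0 : s 0 with _ | _
  · simp [Equiv.Perm.mul_apply, gd_apply, h0]
  · simp [Equiv.Perm.mul_apply, gd_apply, h0]

lemma x0_gd (e : Equiv.Perm S) : x0 * gd e = gd (gd e) * x0 := by
  apply Equiv.ext
  intro s
  rcases h0 : s 0 with _ | _
  · rcases h1 : s 1 with _ | _
    · simp [Equiv.Perm.mul_apply, gd_apply, x0_apply, x0fwd, h0, h1]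
    · simp [Equiv.Perm.mul_apply, gd_apply, x0_apply, x0fwd, h0, h1, tl_def]
  · simp [Equiv.Perm.mul_apply, gd_apply, x0_apply, x0fwd, h0]

lemma xP_rel : ∀ i j : ℕ, i < j → xP i * xP j = xP (j + 1) * xP i := by
  intro i
  induction i with
  | zero =>
    rintro (_ | m) h
    · omega
    · exact x0_gd (xP m)
  | succ k ih =>
    rintro (_ | m) h
    · omega
    · have hk : k < m := by omega
      show gd (xP k) * gd (xP m) = gd (xP (m + 1)) * gd (xP k)
      rw [gd_mul, ih m hk, ← gd_mul]

/-- the stream `1^n 0 1^∞` -/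
def p (n : ℕ) : S := fun k => decide (k ≠ n)

lemma p_succ (n : ℕ) : p (n + 1) = cns true (p n) := by
  funext k; cases k with
  | zero => simp [p]
  | succ k => simp [p]

lemma p_zero_zero : p 0 0 = false := by simp [p]
lemma tl_p_zero : ∀ k, tl (p 0) k = true := by intro k; simp [p, tl_def]

lemma p_inj {n m : ℕ} (h : p n = p m) : n = m := by
  by_contra hnm
  have := congrFun h n
  simp [p, hnm] at this

lemma xP_p (i n : ℕ) : xP i (p n) = if i ≤ n then p (n + 1) else p n := by
  induction i generalizing n with
  | zero =>
    simp only [Nat.zero_le, if_true]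
    cases n with
    | zero =>
      show x0fwd (p 0) = p 1
      have h0 : p 0 0 = false := by simp [p]
      have h1 : p 0 1 = true := by simp [p]
      rw [x0fwd, h0, h1]
      simp only [Bool.false_eq_true, if_false, if_true]
      funext k
      rcases k with _ | _ | k <;> simp [p, cns, tl]
    | succ n =>
      show x0fwd (p (n + 1)) = p (n + 2)
      rw [x0fwd]
      have h0 : p (n + 1) 0 = true := by simp [p]
      rw [h0]
      simp only [if_true]
      rw [p_succ, p_succ, p_succ, tl_cns]
  | succ i ih =>
    cases n with
    | zero =>
      show gd (xP i) (p 0) = _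
      rw [gd_apply, p_zero_zero]
      simp
    | succ n =>
      show gd (xP i) (p (n + 1)) = _
      rw [gd_apply]
      have h0 : p (n + 1) 0 = true := by simp [p]
      rw [h0]
      simp only [if_true, p_succ, tl_cns, ih n]
      by_cases h : i ≤ n
      · simp [h, p_succ]
      · have : ¬ (i + 1 ≤ n + 1) := by omega
        simp [h, this, p_succ]

def permOf (l : List ℕ) : Equiv.Perm S := (l.map xP).prod

@[simp] lemma permOf_nil : permOf [] = 1 := rfl
lemma permOf_cons (a : ℕ) (t : List ℕ) : permOf (a :: t) = xP a * permOf t := by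
  simp [permOf]
lemma permOf_append_singleton (d : List ℕ) (a : ℕ) :
    permOf (d ++ [a]) = permOf d * xP a := by
  simp [permOf]

lemma permOf_big (l : List ℕ) (n : ℕ) (h : ∀ x ∈ l, x ≤ n) :
    permOf l (p n) = p (n + l.length) := by
  induction l with
  | nil => simp
  | cons a t ih =>
    rw [permOf_cons, Equiv.Perm.mul_apply, ih (fun x hx => h x (by simp [hx])), xP_p]
    have : a ≤ n + t.length := le_trans (h a (by simp)) (Nat.le_add_right _ _)
    simp only [this, if_true, List.length_cons]
    rfl

lemma permOf_small (l : List ℕ) (n : ℕ) (h : ∀ x ∈ l, n < x) :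
    permOf l (p n) = p n := by
  induction l with
  | nil => simp
  | cons a t ih =>
    rw [permOf_cons, Equiv.Perm.mul_apply, ih (fun x hx => h x (by simp [hx])), xP_p]
    have : ¬ a ≤ n := by have := h a (by simp); omega
    simp [this]

lemma permOf_grow (l : List ℕ) (n : ℕ) : ∃ m, n ≤ m ∧ permOf l (p n) = p m := by
  induction l with
  | nil => exact ⟨n, le_refl _, by simp⟩
  | cons a t ih =>
    obtain ⟨m, hm, he⟩ := ih
    rw [permOf_cons, Equiv.Perm.mul_apply, he, xP_p]
    by_cases h : a ≤ m
    · exact ⟨m + 1, by omega, by simp [h]⟩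
    · exact ⟨m, hm, by simp [h]⟩

lemma foldr_max_le (L : List ℕ) : ∀ x ∈ L, x ≤ L.foldr max 0 := by
  induction L with
  | nil => simp
  | cons b t ih =>
    intro x hx
    rcases List.mem_cons.mp hx with rfl | hx
    · exact le_max_left _ _
    · exact le_trans (ih x hx) (le_max_right _ _)

lemma length_eq_of_permOf_eq {l1 l2 : List ℕ} (h : permOf l1 = permOf l2) :
    l1.length = l2.length := by
  set n := (l1 ++ l2).foldr max 0 with hn
  have h1 : permOf l1 (p n) = p (n + l1.length) :=
    permOf_big _ _ (fun x hx => foldr_max_le _ x (by simp [hx]))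
  have h2 : permOf l2 (p n) = p (n + l2.length) :=
    permOf_big _ _ (fun x hx => foldr_max_le _ x (by simp [hx]))
  rw [h] at h1
  have := p_inj (h1.symm.trans h2)
  omega

lemma sorted_getLast_le : ∀ (l : List ℕ) (h : l ≠ []), l.Pairwise (· ≥ ·) →
    ∀ x ∈ l, l.getLast h ≤ x
  | [], h => absurd rfl h
  | [a], _ => by
    intro _ x hx
    simp at hx
    subst hx
    simp
  | a :: b :: t, _ => by
    intro hs x hx
    rcases List.pairwise_cons.mp hs with ⟨ha, hts⟩
    have htne : (b :: t) ≠ [] := by simp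
    rw [List.getLast_cons htne]
    rcases List.mem_cons.mp hx with rfl | hx
    · exact le_trans (sorted_getLast_le _ htne hts _ (List.getLast_mem htne))
        (ha _ (List.getLast_mem htne))
    · exact sorted_getLast_le _ htne hts x hx

lemma no_strict_min {l1 l2 : List ℕ} {d1 : List ℕ} {a : ℕ}
    (hl1 : l1 = d1 ++ [a]) (hlt : ∀ x ∈ l2, a < x)
    (h : permOf l1 = permOf l2) : False := by
  have h2 : permOf l2 (p a) = p a := permOf_small _ _ hlt
  obtain ⟨m, hm, he⟩ := permOf_grow d1 (a + 1)
  have h1 : permOf l1 (p a) = p m := by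
    rw [hl1, permOf_append_singleton, Equiv.Perm.mul_apply, xP_p]
    simp only [le_refl, if_true]
    exact he
  rw [h] at h1
  have := p_inj (h1.symm.trans h2)
  omega

lemma permOf_inj : ∀ (N : ℕ) (l1 l2 : List ℕ), l1.length ≤ N →
    l1.Pairwise (· ≥ ·) → l2.Pairwise (· ≥ ·) → permOf l1 = permOf l2 → l1 = l2 := by
  intro N
  induction N with
  | zero =>
    intro l1 l2 hlen _ _ h
    have hlen2 := length_eq_of_permOf_eq h
    have : l1 = [] := List.eq_nil_of_length_eq_zero (by omega)
    subst this
    exact (List.eq_nil_of_length_eq_zero (by omega)).symm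
  | succ N ih =>
    intro l1 l2 hlen hs1 hs2 h
    have hlen2 := length_eq_of_permOf_eq h
    by_cases h1ne : l1 = []
    · subst h1ne
      exact (List.eq_nil_of_length_eq_zero (by simpa using hlen2.symm)).symm
    · have h2ne : l2 ≠ [] := by
        intro hc
        rw [hc] at hlen2
        simp at hlen2
        exact h1ne hlen2
      set a := l1.getLast h1ne with ha
      set b := l2.getLast h2ne with hb
      have hd1 : l1 = l1.dropLast ++ [a] := (List.dropLast_append_getLast h1ne).symm
      have hd2 : l2 = l2.dropLast ++ [b] := (List.dropLast_append_getLast h2ne).symm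
      have hab : a = b := by
        rcases lt_trichotomy a b with hlt | heq | hlt
        · exact absurd (no_strict_min hd1
            (fun x hx => lt_of_lt_of_le hlt (sorted_getLast_le l2 h2ne hs2 x hx)) h) id
        · exact heq
        · exact absurd (no_strict_min hd2
            (fun x hx => lt_of_lt_of_le hlt (sorted_getLast_le l1 h1ne hs1 x hx)) h.symm) id
      have hperm : permOf l1.dropLast = permOf l2.dropLast := by
        have h' := h
        rw [hd1, hd2, permOf_append_singleton, permOf_append_singleton, hab] at h'
        exact mul_right_cancel h'
      have hsd1 : l1.dropLast.Pairwise (· ≥ ·) := hs1.sublist (List.dropLast_sublist l1)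
      have hsd2 : l2.dropLast.Pairwise (· ≥ ·) := hs2.sublist (List.dropLast_sublist l2)
      have hld : l1.dropLast.length ≤ N := by
        have h0 := @List.length_dropLast _ l1
        have h1 : l1.length ≠ 0 := by
          intro hc
          exact h1ne (List.eq_nil_of_length_eq_zero hc)
        omega
      have hdeq := ih l1.dropLast l2.dropLast hld hsd1 hsd2 hperm
      rw [hd1, hd2, hdeq, hab]

end TFNF

open TFNF

lemma thompson_lift_rels : ∀ r ∈ thompsonRels, FreeGroup.lift xP r = 1 := by
  rintro r ⟨i, j, hij, rfl⟩
  simp only [map_mul, map_inv, FreeGroup.lift_apply_of]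
  rw [mul_inv_eq_one]
  exact xP_rel i j hij

def phi : ThompsonF →* Equiv.Perm S := PresentedGroup.toGroup thompson_lift_rels

lemma phi_alphaGen (n : ℕ) : phi (alphaGen n) = xP n :=
  PresentedGroup.toGroup.of thompson_lift_rels

lemma phi_wordProd (l : List ℕ) : phi (wordProd l) = permOf l := by
  rw [wordProd, map_list_prod, permOf]
  congr 1
  rw [List.map_map]
  exact List.map_congr_left (fun x _ => phi_alphaGen x)

lemma alpha_rel {i j : ℕ} (hij : i < j) :
    alphaGen i * alphaGen j = alphaGen (j + 1) * alphaGen i := by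
  rw [← mul_inv_eq_one]
  have hmem : (FreeGroup.of i * FreeGroup.of j *
      (FreeGroup.of (j + 1) * FreeGroup.of i)⁻¹) ∈
      Subgroup.normalClosure thompsonRels :=
    Subgroup.subset_normalClosure ⟨i, j, hij, rfl⟩
  show PresentedGroup.mk thompsonRels (FreeGroup.of i) *
      PresentedGroup.mk thompsonRels (FreeGroup.of j) *
      (PresentedGroup.mk thompsonRels (FreeGroup.of (j+1)) *
       PresentedGroup.mk thompsonRels (FreeGroup.of i))⁻¹ = 1
  rw [← map_mul, ← map_mul, ← map_inv, ← map_mul]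
  exact (QuotientGroup.eq_one_iff _).mpr hmem

/-- insertion of a generator into a sorted word -/
def ins (i : ℕ) : List ℕ → List ℕ
  | [] => [i]
  | j :: t => if j ≤ i then i :: j :: t else (j + 1) :: ins i t

lemma wordProd_cons (a : ℕ) (t : List ℕ) :
    wordProd (a :: t) = alphaGen a * wordProd t := by simp [wordProd]

lemma wordProd_ins (i : ℕ) (w : List ℕ) :
    wordProd (i :: w) = wordProd (ins i w) := by
  induction w generalizing i with
  | nil => rfl
  | cons j t ih =>
    rw [ins]
    by_cases h : j ≤ i
    · simp [h]
    · have hij : i < j := by omega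
      simp only [h, if_false]
      rw [wordProd_cons, wordProd_cons, ← mul_assoc, alpha_rel hij, mul_assoc,
        ← wordProd_cons, ih, ← wordProd_cons]

lemma mem_ins {y i : ℕ} : ∀ {w : List ℕ}, y ∈ ins i w →
    y = i ∨ ∃ z ∈ w, y = z ∨ y = z + 1 := by
  intro w
  induction w with
  | nil => intro h; simp [ins] at h; exact Or.inl h
  | cons j t ih =>
    intro h
    rw [ins] at h
    by_cases hc : j ≤ i
    · simp only [hc, if_true] at h
      rcases List.mem_cons.mp h with rfl | h
      · exact Or.inl rfl
      · rcases List.mem_cons.mp h with rfl | h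
        · exact Or.inr ⟨y, by simp, Or.inl rfl⟩
        · exact Or.inr ⟨y, by simp [h], Or.inl rfl⟩
    · simp only [hc, if_false] at h
      rcases List.mem_cons.mp h with rfl | h
      · exact Or.inr ⟨j, by simp, Or.inr rfl⟩
      · rcases ih h with h | ⟨z, hz, hyz⟩
        · exact Or.inl h
        · exact Or.inr ⟨z, by simp [hz], hyz⟩

lemma ins_sorted {i : ℕ} : ∀ {w : List ℕ}, w.Pairwise (· ≥ ·) →
    (ins i w).Pairwise (· ≥ ·) := by
  intro w
  induction w with
  | nil => intro _; simp [ins]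
  | cons j t ih =>
    intro hs
    rcases List.pairwise_cons.mp hs with ⟨hj, hts⟩
    rw [ins]
    by_cases hc : j ≤ i
    · simp only [hc, if_true]
      rw [List.pairwise_cons]
      refine ⟨?_, hs⟩
      intro b hb
      rcases List.mem_cons.mp hb with rfl | hb
      · exact hc
      · exact le_trans (hj b hb) hc
    · simp only [hc, if_false]
      rw [List.pairwise_cons]
      refine ⟨?_, ih hts⟩
      intro b hb
      rcases mem_ins hb with rfl | ⟨z, hz, hbz⟩
      · omega
      · have := hj z hz
        omega

/-- normal form computation -/
def sortWord (l : List ℕ) : List ℕ := l.foldr ins []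

lemma sortWord_sorted (l : List ℕ) : (sortWord l).Pairwise (· ≥ ·) := by
  induction l with
  | nil => simp [sortWord]
  | cons a t ih => exact ins_sorted ih

lemma wordProd_sortWord (l : List ℕ) : wordProd l = wordProd (sortWord l) := by
  induction l with
  | nil => rfl
  | cons a t ih =>
    show wordProd (a :: t) = wordProd (ins a (t.foldr ins []))
    rw [← wordProd_ins, wordProd_cons, wordProd_cons, ih]
    rfl

/-- Every positive word in the `αᵢ` equals, in `G`, a unique positive word
with non-increasing indices. -/
theorem positive_word_normal_form (l : List ℕ) :
    ∃! l' : List ℕ, l'.Pairwise (· ≥ ·) ∧ wordProd l = wordProd l' := by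
  refine ⟨sortWord l, ⟨sortWord_sorted l, wordProd_sortWord l⟩, ?_⟩
  rintro y ⟨hy, he⟩
  have hperm : permOf y = permOf (sortWord l) := by
    rw [← phi_wordProd, ← phi_wordProd, ← he, wordProd_sortWord l]
  exact permOf_inj y.length y (sortWord l) (le_refl _) hy (sortWord_sorted l) hperm
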